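/- Let n ≥ 2 and let r̂_1,…,r̂_n be positive keys with pairwise distinct values, and let k ≤ n. For each step j with 1 ≤ j ≤ k, as the temperature t tends to 0 from above, the step-j softmax value p_i^j(t) of the iterative softmax top-k relaxation converges to 1 if i is the index of the j-th largest key among r̂_1,…,r̂_n, and converges to 0 otherwise. -/

import Mathlib

open Filter

/-- Tempered softmax of logits `α : Fin n → ℝ` at temperature `t`. -/
noncomputable def softmaxT {n : ℕ} (t : ℝ) (α : Fin n → ℝ) (i : Fin n) : ℝ :=
  Real.exp (α i / t) / ∑ m, Real.exp (α m / t)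

/-- Logits of the iterative softmax top-k relaxation: `alphaIter t r j` is `α^{j+1}`
(the logits used at the `(j+1)`-th step, 0-indexed). -/
noncomputable def alphaIter {n : ℕ} (t : ℝ) (r : Fin n → ℝ) : ℕ → Fin n → ℝ
  | 0 => fun i => Real.log (r i)
  | j + 1 => fun i =>
      alphaIter t r j i + Real.log (1 - softmaxT t (alphaIter t r j) i)

/-- `pIter t r j i` is the softmax value `p_i^{j+1}` at the `(j+1)`-th step (0-indexed `j`). -/
noncomputable def pIter {n : ℕ} (t : ℝ) (r : Fin n → ℝ) (j : ℕ) (i : Fin n) : ℝ :=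
  softmaxT t (alphaIter t r j) i

namespace ITaux
open Real Finset Topology

local notation "L" => nhdsWithin (0:ℝ) (Set.Ioi (0:ℝ))

variable {n : ℕ}


noncomputable def rnk (r : Fin n → ℝ) (i : Fin n) : ℕ := (Finset.univ.filter fun m => r i < r m).card

lemma rnk_lt (r : Fin n → ℝ) (i : Fin n) : rnk r i < n := by
  have h1 : (Finset.univ.filter fun m => r i < r m) ⊆ Finset.univ.erase i := by
    intro m hm
    rcases Finset.mem_filter.1 hm with ⟨_, h⟩
    exact Finset.mem_erase.2 ⟨fun he => absurd (he ▸ h) (lt_irrefl _), Finset.mem_univ m⟩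
  calc rnk r i ≤ (Finset.univ.erase i).card := Finset.card_le_card h1
    _ = n - 1 := by
        rw [Finset.card_erase_of_mem (Finset.mem_univ i), Finset.card_univ, Fintype.card_fin]
    _ < n := Nat.sub_lt i.pos one_pos

lemma rnk_anti (r : Fin n → ℝ) {a b : Fin n} (hab : r a < r b) : rnk r b < rnk r a := by
  have hsub : (Finset.univ.filter fun m => r b < r m) ⊆ (Finset.univ.filter fun m => r a < r m) := by
    intro m hm
    rcases Finset.mem_filter.1 hm with ⟨_, h⟩
    exact Finset.mem_filter.2 ⟨Finset.mem_univ _, hab.trans h⟩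
  refine Finset.card_lt_card ((Finset.ssubset_iff_of_subset hsub).2 ⟨b, ?_, by simp⟩)
  exact Finset.mem_filter.2 ⟨Finset.mem_univ _, hab⟩

lemma r_lt_of_rnk_lt {r : Fin n → ℝ} (hinj : Function.Injective r) {a b : Fin n}
    (h : rnk r a < rnk r b) : r b < r a := by
  rcases lt_trichotomy (r b) (r a) with h1 | h1 | h1
  · exact h1
  · exact absurd h (by rw [hinj h1]; exact lt_irrefl _)
  · exact absurd (rnk_anti r h1) (by omega)

lemma rnk_injective {r : Fin n → ℝ} (hinj : Function.Injective r) {a b : Fin n}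
    (hab : rnk r a = rnk r b) : a = b := by
  by_contra hne
  rcases lt_trichotomy (r a) (r b) with h | h | h
  · exact absurd hab (by have := rnk_anti r h; omega)
  · exact hne (hinj h)
  · exact absurd hab (by have := rnk_anti r h; omega)

lemma exists_rnk {r : Fin n → ℝ} (hinj : Function.Injective r) {j : ℕ} (hj : j < n) :
    ∃ i, rnk r i = j := by
  have hs : Function.Surjective (fun i => (⟨rnk r i, rnk_lt r i⟩ : Fin n)) := by
    apply Finite.injective_iff_surjective.1
    intro a b hab
    exact rnk_injective hinj (by simpa using congrArg Fin.val hab)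
  rcases hs ⟨j, hj⟩ with ⟨i, hi⟩
  exact ⟨i, by simpa using congrArg Fin.val hi⟩

lemma sum_exp_pos (i : Fin n) (t : ℝ) (α : Fin n → ℝ) :
    0 < ∑ m, Real.exp (α m / t) :=
  Finset.sum_pos (fun m _ => Real.exp_pos _) ⟨i, Finset.mem_univ i⟩

lemma softmaxT_pos (t : ℝ) (α : Fin n → ℝ) (i : Fin n) : 0 < softmaxT t α i :=
  div_pos (Real.exp_pos _) (sum_exp_pos i t α)

lemma softmaxT_le_one (t : ℝ) (α : Fin n → ℝ) (i : Fin n) : softmaxT t α i ≤ 1 := by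
  rw [softmaxT, div_le_one (sum_exp_pos i t α)]
  exact Finset.single_le_sum (f := fun m => Real.exp (α m / t)) (fun m _ => (Real.exp_pos _).le) (Finset.mem_univ i)

lemma softmaxT_lt_one (hn : 2 ≤ n) (t : ℝ) (α : Fin n → ℝ) (i : Fin n) : softmaxT t α i < 1 := by
  rw [softmaxT, div_lt_one (sum_exp_pos i t α)]
  have : Nontrivial (Fin n) := Fin.nontrivial_iff_two_le.2 hn
  obtain ⟨m, hm⟩ := exists_ne i
  exact Finset.single_lt_sum (f := fun m => Real.exp (α m / t)) hm (Finset.mem_univ i) (Finset.mem_univ m) (Real.exp_pos _)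
    (fun k _ _ => (Real.exp_pos _).le)

lemma softmaxT_eq_inv (t : ℝ) (α : Fin n → ℝ) (i : Fin n) :
    softmaxT t α i = (∑ m, Real.exp ((α m - α i) / t))⁻¹ := by
  have h1 : ∀ m : Fin n, Real.exp ((α m - α i) / t)
      = Real.exp (α m / t) / Real.exp (α i / t) := fun m => by rw [sub_div, Real.exp_sub]
  rw [softmaxT, Finset.sum_congr rfl fun m _ => h1 m, ← Finset.sum_div, inv_div]

lemma softmaxT_ratio (t : ℝ) (α : Fin n → ℝ) (i i' : Fin n) :
    softmaxT t α i = Real.exp ((α i - α i') / t) * softmaxT t α i' := by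
  rw [softmaxT, softmaxT, sub_div, Real.exp_sub, div_mul_div_comm,
    mul_comm (Real.exp (α i / t)) (Real.exp (α i' / t)),
    mul_div_mul_left _ _ (Real.exp_ne_zero _)]


section Helpers


lemma tpos : ∀ᶠ t : ℝ in L, 0 < t := by
  filter_upwards [self_mem_nhdsWithin] with t ht; exact ht

lemma const_div_atBot {c : ℝ} (hc : c < 0) : Tendsto (fun t : ℝ => c / t) L atBot := by
  have h := tendsto_inv_nhdsGT_zero.atTop_mul_neg hc tendsto_const_nhds
  refine h.congr fun t => ?_
  rw [div_eq_mul_inv, mul_comm]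

lemma mul_exp_neg {c : ℝ} (hc : c < 0) :
    Tendsto (fun x : ℝ => x * Real.exp (c * x)) atTop (𝓝 0) := by
  have h1 : Tendsto (fun x : ℝ => (-c) * x) atTop atTop :=
    Tendsto.const_mul_atTop (by linarith) tendsto_id
  have h2 := (tendsto_pow_mul_exp_neg_atTop_nhds_zero 1).comp h1
  have h3 := h2.const_mul ((-c)⁻¹)
  rw [mul_zero] at h3
  refine h3.congr fun x => ?_
  simp only [Function.comp, pow_one]
  have hcne : -c ≠ 0 := by linarith
  rw [show -(-c * x) = c * x by ring,
    show (-c)⁻¹ * (-c * x * Real.exp (c*x)) = ((-c)⁻¹ * (-c * x)) * Real.exp (c*x) by ring,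
    show (-c)⁻¹ * (-c*x) = x by field_simp; exact mul_div_cancel_left₀ x (by linarith : c ≠ 0)]

lemma exp_div_t_tendsto {c : ℝ} (hc : c < 0) :
    Tendsto (fun t : ℝ => Real.exp (c / t) / t) L (𝓝 0) := by
  have h := (mul_exp_neg hc).comp tendsto_inv_nhdsGT_zero
  refine h.congr fun t => ?_
  simp only [Function.comp]
  rw [div_eq_mul_inv, div_eq_mul_inv, mul_comm, mul_comm c t⁻¹]

lemma neg_two_mul_le_log_one_sub {p : ℝ} (h0 : 0 ≤ p) (h : p ≤ 1/2) :
    -(2*p) ≤ Real.log (1 - p) := by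
  rw [← Real.log_exp (-(2*p))]
  apply Real.log_le_log (Real.exp_pos _)
  have h1 : 1 + 2*p ≤ Real.exp (2*p) := by
    have := Real.add_one_le_exp (2*p); linarith
  have h2 : Real.exp (-(2*p)) = (Real.exp (2*p))⁻¹ := Real.exp_neg _
  rw [h2]
  have h3 : (0:ℝ) < 1 + 2*p := by linarith
  have h4 : (Real.exp (2*p))⁻¹ ≤ (1 + 2*p)⁻¹ := by
    apply inv_anti₀ h3 h1
  refine h4.trans ?_
  rw [inv_le_iff_one_le_mul₀ h3]
  nlinarith

end Helpers


variable {n : ℕ}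

def H1prop (r : Fin n → ℝ) (j : ℕ) : Prop := ∀ m : Fin n, j ≤ rnk r m →
  Tendsto (fun t => (alphaIter t r j m - Real.log (r m)) / t) L (𝓝 0)

def H2prop (r : Fin n → ℝ) (j : ℕ) : Prop := ∀ l m : Fin n, rnk r l < j → j ≤ rnk r m →
  Tendsto (fun t => (alphaIter t r j l - alphaIter t r j m) / t) L atBot

variable {r : Fin n → ℝ} {j : ℕ}

lemma D_atBot (hr : ∀ i, 0 < r i) (hinj : Function.Injective r)
    (h1 : H1prop r j) (h2 : H2prop r j) {istar m : Fin n}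
    (hstar : rnk r istar = j) (hm : m ≠ istar) :
    Tendsto (fun t => (alphaIter t r j m - alphaIter t r j istar) / t) L atBot := by
  rcases lt_or_ge (rnk r m) j with hcase | hcase
  · exact h2 m istar hcase hstar.ge
  · have hne : rnk r m ≠ j := fun he => hm (rnk_injective hinj (he.trans hstar.symm))
    have hgt : j < rnk r m := lt_of_le_of_ne hcase (Ne.symm hne)
    have hrm : r m < r istar := r_lt_of_rnk_lt hinj (hstar ▸ hgt)
    have hcneg : Real.log (r m) - Real.log (r istar) < 0 :=
      sub_neg.2 (Real.log_lt_log (hr m) hrm)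
    have hf := (h1 m hcase).sub (h1 istar hstar.ge)
    rw [sub_zero] at hf
    have hg := const_div_atBot hcneg
    have := tendsto_atBot_add_left_of_ge' L 1 (hf.eventually (eventually_le_nhds one_pos)) hg
    exact this.congr fun t => by ring

lemma pStar_one (hr : ∀ i, 0 < r i) (hinj : Function.Injective r)
    (h1 : H1prop r j) (h2 : H2prop r j) {istar : Fin n} (hstar : rnk r istar = j) :
    Tendsto (fun t => pIter t r j istar) L (𝓝 1) := by
  have hsum : Tendsto
      (fun t => ∑ m, Real.exp ((alphaIter t r j m - alphaIter t r j istar) / t)) L (𝓝 1) := by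
    have hrest : Tendsto (fun t => ∑ m ∈ Finset.univ.erase istar,
        Real.exp ((alphaIter t r j m - alphaIter t r j istar) / t)) L (𝓝 0) := by
      have : Tendsto (fun t => ∑ m ∈ Finset.univ.erase istar,
          Real.exp ((alphaIter t r j m - alphaIter t r j istar) / t)) L
          (𝓝 (∑ m ∈ Finset.univ.erase istar, (0:ℝ))) := by
        apply tendsto_finset_sum
        intro m hm
        exact Real.tendsto_exp_atBot.comp
          (D_atBot hr hinj h1 h2 hstar (Finset.mem_erase.1 hm).1)
      simpa using this
    have h01 : Tendsto (fun t : ℝ => Real.exp ((alphaIter t r j istar - alphaIter t r j istar) / t)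
        + ∑ m ∈ Finset.univ.erase istar,
          Real.exp ((alphaIter t r j m - alphaIter t r j istar) / t)) L (𝓝 1) := by
      have := (tendsto_const_nhds (x := (1:ℝ)) (f := L)).add hrest
      rw [add_zero] at this
      refine this.congr fun t => ?_
      rw [sub_self, zero_div, Real.exp_zero]
    refine h01.congr fun t => ?_
    exact Finset.add_sum_erase _ (fun m => Real.exp ((alphaIter t r j m - alphaIter t r j istar) / t)) (Finset.mem_univ istar)
  have hinv := hsum.inv₀ one_ne_zero
  rw [inv_one] at hinv
  refine hinv.congr fun t => ?_
  exact (softmaxT_eq_inv t _ istar).symm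

lemma p_zero (hr : ∀ i, 0 < r i) (hinj : Function.Injective r)
    (h1 : H1prop r j) (h2 : H2prop r j) {istar m : Fin n}
    (hstar : rnk r istar = j) (hm : m ≠ istar) :
    Tendsto (fun t => pIter t r j m) L (𝓝 0) := by
  have h := (Real.tendsto_exp_atBot.comp (D_atBot hr hinj h1 h2 hstar hm)).mul
    (pStar_one hr hinj h1 h2 hstar)
  rw [zero_mul] at h
  refine h.congr fun t => ?_
  exact (softmaxT_ratio t _ m istar).symm

lemma p_div_t_zero (hn : 2 ≤ n) (hr : ∀ i, 0 < r i) (hinj : Function.Injective r)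
    (h1 : H1prop r j) (h2 : H2prop r j) {istar m : Fin n}
    (hstar : rnk r istar = j) (hgt : j < rnk r m) :
    Tendsto (fun t => pIter t r j m / t) L (𝓝 0) := by
  have hm : m ≠ istar := by
    intro he; rw [he, hstar] at hgt; exact lt_irrefl _ hgt
  have hrm : r m < r istar := r_lt_of_rnk_lt hinj (hstar ▸ hgt)
  set c := Real.log (r m) - Real.log (r istar) with hc
  have hcneg : c < 0 := sub_neg.2 (Real.log_lt_log (hr m) hrm)
  have hfac : Tendsto (fun t => Real.exp
      ((alphaIter t r j m - alphaIter t r j istar) / t - c / t)) L (𝓝 1) := by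
    have hbase := (h1 m hgt.le).sub (h1 istar hstar.ge)
    rw [sub_zero] at hbase
    have hexp : Tendsto Real.exp (𝓝 0) (𝓝 1) := by
      simpa using Real.continuous_exp.tendsto 0
    refine (hexp.comp hbase).congr fun t => ?_
    simp only [Function.comp]
    congr 1
    rw [hc]; ring
  have hmain := hfac.mul (exp_div_t_tendsto hcneg)
  rw [mul_zero] at hmain
  have hupper : Tendsto
      (fun t => Real.exp ((alphaIter t r j m - alphaIter t r j istar) / t) / t) L (𝓝 0) := by
    refine hmain.congr fun t => ?_
    rw [mul_div_assoc', ← Real.exp_add]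
    ring_nf
  refine squeeze_zero' ?_ ?_ hupper
  · filter_upwards [tpos] with t ht
    exact div_nonneg (softmaxT_pos t _ m).le ht.le
  · filter_upwards [tpos] with t ht
    have hple : pIter t r j m ≤ Real.exp ((alphaIter t r j m - alphaIter t r j istar) / t) := by
      rw [pIter, softmaxT_ratio t _ m istar]
      calc Real.exp ((alphaIter t r j m - alphaIter t r j istar) / t)
            * softmaxT t (alphaIter t r j) istar
          ≤ Real.exp ((alphaIter t r j m - alphaIter t r j istar) / t) * 1 := by
            apply mul_le_mul_of_nonneg_left (softmaxT_le_one t _ istar) (Real.exp_pos _).le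
        _ = _ := mul_one _
    exact (div_le_div_iff_of_pos_right ht).2 hple

lemma log_one_sub_p_div_t (hn : 2 ≤ n) (hr : ∀ i, 0 < r i) (hinj : Function.Injective r)
    (h1 : H1prop r j) (h2 : H2prop r j) {istar m : Fin n}
    (hstar : rnk r istar = j) (hgt : j < rnk r m) :
    Tendsto (fun t => Real.log (1 - pIter t r j m) / t) L (𝓝 0) := by
  have hp := p_div_t_zero hn hr hinj h1 h2 hstar hgt
  have hlower : Tendsto (fun t => -(2 * (pIter t r j m / t))) L (𝓝 0) := by
    have := (hp.const_mul 2).neg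
    simpa using this
  refine tendsto_of_tendsto_of_tendsto_of_le_of_le' hlower tendsto_const_nhds ?_ ?_
  · filter_upwards [tpos, hp.eventually (eventually_le_nhds (by norm_num : (0:ℝ) < 1/2)),
      (eventually_lt_nhds (by norm_num : (0:ℝ) < 1)).filter_mono nhdsWithin_le_nhds] with t ht hp2 ht1
    have hple : pIter t r j m ≤ 1/2 := by
      have : pIter t r j m = (pIter t r j m / t) * t := by field_simp
      rw [this]
      calc (pIter t r j m / t) * t ≤ (1/2) * t := by
            apply mul_le_mul_of_nonneg_right hp2 ht.le
        _ ≤ 1/2 := by nlinarith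
    have hlog := neg_two_mul_le_log_one_sub (softmaxT_pos t _ m).le hple
    calc -(2 * (pIter t r j m / t)) = -(2 * pIter t r j m) / t := by ring
      _ ≤ Real.log (1 - pIter t r j m) / t := (div_le_div_iff_of_pos_right ht).2 hlog
  · filter_upwards [tpos] with t ht
    apply div_nonpos_of_nonpos_of_nonneg _ ht.le
    apply Real.log_nonpos
    · have := softmaxT_lt_one hn t (alphaIter t r j) m
      simp [pIter]; linarith
    · have := softmaxT_pos t (alphaIter t r j) m
      simp [pIter]; linarith

lemma invariant (hn : 2 ≤ n) (hr : ∀ i, 0 < r i) (hinj : Function.Injective r) :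
    ∀ j, H1prop r j ∧ H2prop r j := by
  intro j
  induction j with
  | zero =>
    constructor
    · intro m _
      have : (fun t : ℝ => (alphaIter t r 0 m - Real.log (r m)) / t) = fun _ => 0 := by
        funext t; simp [alphaIter]
      rw [this]; exact tendsto_const_nhds
    · intro l m hl _; omega
  | succ j ih =>
    obtain ⟨h1, h2⟩ := ih
    by_cases hjn : j < n
    · obtain ⟨istar, hstar⟩ := exists_rnk hinj hjn
      constructor
      · -- H1 at j+1
        intro m hm
        have hlog := log_one_sub_p_div_t hn hr hinj h1 h2 hstar (by omega : j < rnk r m)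
        have hsum := (h1 m (by omega)).add hlog
        rw [add_zero] at hsum
        refine hsum.congr fun t => ?_
        show (alphaIter t r j m - Real.log (r m)) / t + Real.log (1 - pIter t r j m) / t
          = (alphaIter t r (j+1) m - Real.log (r m)) / t
        rw [show alphaIter t r (j+1) m
            = alphaIter t r j m + Real.log (1 - softmaxT t (alphaIter t r j) m) from rfl]
        rw [show pIter t r j m = softmaxT t (alphaIter t r j) m from rfl]
        ring
      · -- H2 at j+1
        intro l m hl hm
        have hgtm : j < rnk r m := by omega
        have hlog_m := log_one_sub_p_div_t hn hr hinj h1 h2 hstar hgtm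
        by_cases hlj : rnk r l < j
        · -- previously selected index
          have hbase := h2 l m hlj (by omega)
          have hg : Tendsto (fun t => (alphaIter t r j l - alphaIter t r j m) / t
              + (- (Real.log (1 - pIter t r j m) / t))) L atBot := by
            apply tendsto_atBot_add_right_of_ge' L 1 hbase
            have := hlog_m.neg
            rw [neg_zero] at this
            exact this.eventually (eventually_le_nhds one_pos)
          refine tendsto_atBot_mono' L ?_ hg
          filter_upwards [tpos] with t ht
          have hlogl : Real.log (1 - pIter t r j l) ≤ 0 := by
            apply Real.log_nonpos
            · have := softmaxT_lt_one hn t (alphaIter t r j) l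
              simp [pIter]; linarith
            · have := softmaxT_pos t (alphaIter t r j) l
              simp [pIter]; linarith
          rw [show alphaIter t r (j+1) l
              = alphaIter t r j l + Real.log (1 - pIter t r j l) from rfl,
            show alphaIter t r (j+1) m
              = alphaIter t r j m + Real.log (1 - pIter t r j m) from rfl]
          rw [show (alphaIter t r j l + Real.log (1 - pIter t r j l)
              - (alphaIter t r j m + Real.log (1 - pIter t r j m))) / t
              = (alphaIter t r j l - alphaIter t r j m) / t
                + Real.log (1 - pIter t r j l) / t
                + (- (Real.log (1 - pIter t r j m) / t)) by ring]
          have : Real.log (1 - pIter t r j l) / t ≤ 0 :=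
            div_nonpos_of_nonpos_of_nonneg hlogl ht.le
          linarith
        · -- l is the freshly selected index istar
          have hlstar : l = istar := rnk_injective hinj (by omega : rnk r l = rnk r istar)
          subst hlstar
          have hrm : r m < r l := r_lt_of_rnk_lt hinj (by omega : rnk r l < rnk r m)
          set c := Real.log (r l) - Real.log (r m) with hcdef
          have hcpos : 0 < c := sub_pos.2 (Real.log_lt_log (hr m) hrm)
          set M := c + Real.log n + 1 with hMdef
          -- eventually all other indices have exponent ratio ≤ -M
          have hev1 : ∀ᶠ t in L, ∀ m' ∈ Finset.univ.erase l,
              (alphaIter t r j m' - alphaIter t r j l) / t ≤ -M := by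
            rw [eventually_all_finset]
            intro m' hm'
            exact (D_atBot hr hinj h1 h2 hstar (Finset.mem_erase.1 hm').1).eventually
              (eventually_le_atBot (-M))
          have hbase := (h1 l hstar.ge).sub (h1 m (by omega))
          rw [sub_zero] at hbase
          have hev2 := hbase.eventually (eventually_le_nhds one_pos)
          have hev3 : ∀ᶠ t in L, - (Real.log (1 - pIter t r j m) / t) ≤ 1 := by
            have := hlog_m.neg
            rw [neg_zero] at this
            exact this.eventually (eventually_le_nhds one_pos)
          have hg : Tendsto (fun t : ℝ => 2 + (-1 : ℝ) / t) L atBot :=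
            tendsto_atBot_add_const_left L 2 (const_div_atBot (by norm_num))
          refine tendsto_atBot_mono' L ?_ hg
          filter_upwards [tpos, hev1, hev2, hev3] with t ht hev1 hev2 hev3
          -- bound log (1 - p_l)
          have hcard : (Finset.univ.erase l).Nonempty := by
            have : Nontrivial (Fin n) := Fin.nontrivial_iff_two_le.2 hn
            obtain ⟨m', hm'⟩ := exists_ne l
            exact ⟨m', Finset.mem_erase.2 ⟨hm', Finset.mem_univ _⟩⟩
          have hSpos : 0 < ∑ m', Real.exp (alphaIter t r j m' / t) :=
            sum_exp_pos l t (alphaIter t r j)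
          have hepos : 0 < Real.exp (alphaIter t r j l / t) := Real.exp_pos _
          have hesum : Real.exp (alphaIter t r j l / t)
              + ∑ m' ∈ Finset.univ.erase l, Real.exp (alphaIter t r j m' / t)
              = ∑ m', Real.exp (alphaIter t r j m' / t) :=
            Finset.add_sum_erase _ (fun m' => Real.exp (alphaIter t r j m' / t))
              (Finset.mem_univ l)
          have hrestpos : 0 < ∑ m' ∈ Finset.univ.erase l, Real.exp (alphaIter t r j m' / t) :=
            Finset.sum_pos (fun _ _ => Real.exp_pos _) hcard
          have hstep1 : 1 - pIter t r j l
              ≤ ∑ m' ∈ Finset.univ.erase l,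
                  Real.exp ((alphaIter t r j m' - alphaIter t r j l) / t) := by
            have h1p : 1 - pIter t r j l
                = (∑ m' ∈ Finset.univ.erase l, Real.exp (alphaIter t r j m' / t))
                  / ∑ m', Real.exp (alphaIter t r j m' / t) := by
              rw [show pIter t r j l = softmaxT t (alphaIter t r j) l from rfl, softmaxT,
                one_sub_div hSpos.ne']
              congr 1
              linarith [hesum]
            rw [h1p]
            have hstep : (∑ m' ∈ Finset.univ.erase l, Real.exp (alphaIter t r j m' / t))
                / ∑ m', Real.exp (alphaIter t r j m' / t)
                ≤ (∑ m' ∈ Finset.univ.erase l, Real.exp (alphaIter t r j m' / t))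
                  / Real.exp (alphaIter t r j l / t) := by
              apply div_le_div_of_nonneg_left hrestpos.le hepos
              linarith [hesum, hrestpos]
            refine hstep.trans ?_
            rw [Finset.sum_div]
            apply le_of_eq
            exact Finset.sum_congr rfl fun m' _ => by rw [sub_div, Real.exp_sub]
          have hstep2 : ∑ m' ∈ Finset.univ.erase l,
              Real.exp ((alphaIter t r j m' - alphaIter t r j l) / t)
              ≤ (n : ℝ) * Real.exp (-M) := by
            calc ∑ m' ∈ Finset.univ.erase l,
                Real.exp ((alphaIter t r j m' - alphaIter t r j l) / t)
                ≤ (Finset.univ.erase l).card • Real.exp (-M) :=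
                  Finset.sum_le_card_nsmul _ _ _ fun m' hm' =>
                    Real.exp_le_exp.2 (hev1 m' hm')
              _ = ((Finset.univ.erase l).card : ℝ) * Real.exp (-M) := nsmul_eq_mul _ _
              _ ≤ (n : ℝ) * Real.exp (-M) := by
                  apply mul_le_mul_of_nonneg_right _ (Real.exp_pos _).le
                  have : (Finset.univ.erase l).card ≤ n := by
                    calc (Finset.univ.erase l).card ≤ Finset.univ.card :=
                      Finset.card_le_card (Finset.erase_subset _ _)
                    _ = n := by rw [Finset.card_univ, Fintype.card_fin]
                  exact_mod_cast this
          have hlogbound : Real.log (1 - pIter t r j l) ≤ -c - 1 := by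
            have hpos1 : 0 < 1 - pIter t r j l := by
              have := softmaxT_lt_one hn t (alphaIter t r j) l
              simp only [pIter]; linarith
            calc Real.log (1 - pIter t r j l)
                ≤ Real.log ((n : ℝ) * Real.exp (-M)) :=
                  Real.log_le_log hpos1 (hstep1.trans hstep2)
              _ = Real.log n + (-M) := by
                  rw [Real.log_mul (by positivity) (Real.exp_ne_zero _), Real.log_exp]
              _ = -c - 1 := by rw [hMdef]; ring
          -- final assembly
          rw [show alphaIter t r (j+1) l
              = alphaIter t r j l + Real.log (1 - pIter t r j l) from rfl,
            show alphaIter t r (j+1) m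
              = alphaIter t r j m + Real.log (1 - pIter t r j m) from rfl]
          have hkey : (alphaIter t r j l + Real.log (1 - pIter t r j l)
              - (alphaIter t r j m + Real.log (1 - pIter t r j m))) / t
              = ((alphaIter t r j l - Real.log (r l)) / t
                  - (alphaIter t r j m - Real.log (r m)) / t)
                + c / t + Real.log (1 - pIter t r j l) / t
                + (- (Real.log (1 - pIter t r j m) / t)) := by
            rw [hcdef]; ring
          rw [hkey]
          have hlt : Real.log (1 - pIter t r j l) / t ≤ (-c - 1) / t :=
            (div_le_div_iff_of_pos_right ht).2 hlogbound
          have hcomb : c / t + (-c - 1) / t = (-1 : ℝ) / t := by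
            rw [← add_div]; ring_nf
          linarith [hev2, hev3, hlt, hcomb]
    · constructor
      · intro m hm; exact absurd (rnk_lt r m) (by omega)
      · intro l m _ hm; exact absurd (rnk_lt r m) (by omega)

end ITaux

/-- For distinct positive keys, as `t → 0⁺` the step-`j` softmax value `p_i^j(t)` of the
iterative softmax top-k relaxation converges to `1` if `i` is the index of the `j`-th largest
key (i.e. exactly `j - 1` keys exceed `r̂ᵢ`) and to `0` otherwise.  The paper's 1-indexed
step `j` corresponds to index `j - 1` of `pIter`. -/
theorem pIter_tendsto_jth_largest {n : ℕ} (hn : 2 ≤ n) (r : Fin n → ℝ)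
    (hr : ∀ i, 0 < r i) (hinj : Function.Injective r) (k : ℕ) (hk : k ≤ n)
    (j : ℕ) (hj1 : 1 ≤ j) (hjk : j ≤ k) (i : Fin n) :
    Tendsto (fun t : ℝ => pIter t r (j - 1) i) (nhdsWithin 0 (Set.Ioi 0))
      (nhds (if (Finset.univ.filter fun m => r i < r m).card = j - 1 then 1 else 0)) := by
  have hj' : j - 1 < n := by omega
  obtain ⟨h1, h2⟩ := ITaux.invariant hn hr hinj (j - 1)
  obtain ⟨istar, hstar⟩ := ITaux.exists_rnk hinj hj'
  by_cases h : (Finset.univ.filter fun m => r i < r m).card = j - 1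
  · rw [if_pos h]
    have hi : ITaux.rnk r i = j - 1 := h
    have : i = istar := ITaux.rnk_injective hinj (hi.trans hstar.symm)
    subst this
    exact ITaux.pStar_one hr hinj h1 h2 hstar
  · rw [if_neg h]
    have hi : ITaux.rnk r i ≠ j - 1 := h
    exact ITaux.p_zero hr hinj h1 h2 hstar (fun he => hi (he ▸ hstar))
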